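/- arXiv:1506.07010 — 2 statements merged into one kernel-verified Lean document; each statement's English description precedes it below -/
import Mathlib

section
/- Let f : D_R → ℂ, 1 < R < ∞, be analytic with f(z) = Σ_{k=0}^∞ c_k z^k on D_R, and suppose there exist M > 0 and A ∈ (1/R, 1) such that |c_k| ≤ M A^k / k! for all k ≥ 0. If 1 ≤ r < 1/A, then for all z with |z| ≤ r and all n ∈ ℕ with n > r + 2, the series L_n*(f)(z) = Σ_{k=0}^∞ c_k T_{n,k}(z) converges absolutely and |L_n*(f)(z)| ≤ M e^{Ar} + M (r+2) Σ_{k=0}^∞ (k+1)(Ar)^k < ∞. -/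
open Polynomial

/-- The polynomials `T_{n,k}` defined by `T_{n,0}(z) = 1` and
`T_{n,k+1}(z) = (z(1+z)/n) · T_{n,k}′(z) + ((nz+k)/n) · T_{n,k}(z)`. -/
noncomputable def T (n : ℕ) : ℕ → ℂ → ℂ
  | 0 => fun _ => 1
  | k + 1 => fun z =>
      (z * (1 + z) / (n : ℂ)) * deriv (T n k) z + (((n : ℂ) * z + (k : ℂ)) / (n : ℂ)) * T n k z

/-- Real polynomial version of `T n k`. -/
noncomputable def Qaux (n : ℕ) : ℕ → Polynomial ℝ
  | 0 => 1
  | k + 1 => C ((n : ℝ))⁻¹ * (X * (1 + X)) * derivative (Qaux n k)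
      + C ((n : ℝ))⁻¹ * (C (n : ℝ) * X + C (k : ℝ)) * Qaux n k

lemma T_eq_Qaux (n : ℕ) : ∀ k, T n k = fun z => aeval z (Qaux n k) := by
  intro k
  induction k with
  | zero => funext z; simp [T, Qaux]
  | succ k ih =>
      funext z
      simp only [T, ih, Polynomial.deriv_aeval, Qaux, map_add, map_mul, aeval_C, aeval_X,
        map_one]
      push_cast
      ring

lemma coeff_mul_nonneg {p q : Polynomial ℝ} (hp : ∀ i, 0 ≤ p.coeff i)
    (hq : ∀ i, 0 ≤ q.coeff i) : ∀ i, 0 ≤ (p * q).coeff i := by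
  intro i
  rw [Polynomial.coeff_mul]
  exact Finset.sum_nonneg fun x _ => mul_nonneg (hp _) (hq _)

lemma Qaux_coeff_nonneg (n : ℕ) : ∀ k i, 0 ≤ (Qaux n k).coeff i := by
  intro k
  induction k with
  | zero => intro i; simp [Qaux, Polynomial.coeff_one]; positivity
  | succ k ih =>
      intro i
      have hinv : (0:ℝ) ≤ ((n:ℝ))⁻¹ := inv_nonneg.mpr (Nat.cast_nonneg n)
      have hC : ∀ (a : ℝ), 0 ≤ a → ∀ j, 0 ≤ (C a).coeff j := by
        intro a ha j; simp only [Polynomial.coeff_C]; split <;> simp [ha]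
      have hX : ∀ j, 0 ≤ (X * (1 + X) : Polynomial ℝ).coeff j := by
        have h : (X * (1 + X) : Polynomial ℝ) = X + X ^ 2 := by ring
        rw [h]; intro j
        simp only [Polynomial.coeff_add, Polynomial.coeff_X, Polynomial.coeff_X_pow]
        positivity
      have hL : ∀ j, 0 ≤ (C (n : ℝ) * X + C (k : ℝ)).coeff j := by
        intro j
        simp only [Polynomial.coeff_add, Polynomial.coeff_C_mul, Polynomial.coeff_X,
          Polynomial.coeff_C]
        positivity
      have hD : ∀ j, 0 ≤ (derivative (Qaux n k)).coeff j := by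
        intro j
        rw [Polynomial.coeff_derivative]
        exact mul_nonneg (ih _) (by positivity)
      rw [Qaux]
      simp only [Polynomial.coeff_add]
      have h1 := coeff_mul_nonneg (coeff_mul_nonneg (hC _ hinv) hX) hD i
      have h2 := coeff_mul_nonneg (coeff_mul_nonneg (hC _ hinv) hL) ih i
      linarith

lemma Qaux_natDegree_le (n : ℕ) : ∀ k, (Qaux n k).natDegree ≤ k := by
  intro k
  induction k with
  | zero => simp [Qaux]
  | succ k ih =>
      have hXd : (X * (1 + X) : Polynomial ℝ).natDegree ≤ 2 := by
        rw [show (X * (1 + X) : Polynomial ℝ) = X + X ^ 2 by ring]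
        refine le_trans (Polynomial.natDegree_add_le _ _) ?_
        simp
      have hLd : (C (n : ℝ) * X + C (k : ℝ)).natDegree ≤ 1 := by
        refine le_trans (Polynomial.natDegree_add_le _ _) (max_le ?_ ?_)
        · exact le_trans (Polynomial.natDegree_mul_le) (by simp)
        · simp
      have hterm1 : (C ((n : ℝ))⁻¹ * (X * (1 + X)) * derivative (Qaux n k)).natDegree
          ≤ k + 1 := by
        match k, ih with
        | 0, _ =>
            have h0 : derivative (Qaux n 0) = 0 := by simp [Qaux]
            simp [h0]
        | (j+1), ih =>
            refine le_trans (Polynomial.natDegree_mul_le) ?_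
            have h1 : (C ((n : ℝ))⁻¹ * (X * (1 + X))).natDegree ≤ 2 :=
              le_trans (Polynomial.natDegree_mul_le) (by simpa using hXd)
            have h2 : (derivative (Qaux n (j+1))).natDegree ≤ j := by
              refine le_trans (Polynomial.natDegree_derivative_le _) ?_
              omega
            omega
      have hterm2 : (C ((n : ℝ))⁻¹ * (C (n : ℝ) * X + C (k : ℝ)) * Qaux n k).natDegree
          ≤ k + 1 := by
        refine le_trans (Polynomial.natDegree_mul_le) ?_
        have h1 : (C ((n : ℝ))⁻¹ * (C (n : ℝ) * X + C (k : ℝ))).natDegree ≤ 1 :=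
          le_trans (Polynomial.natDegree_mul_le) (by simpa using hLd)
        omega
      rw [Qaux]
      exact le_trans (Polynomial.natDegree_add_le _ _) (max_le hterm1 hterm2)

lemma eval_nonneg' {p : Polynomial ℝ} (hp : ∀ i, 0 ≤ p.coeff i) {r : ℝ} (hr : 0 ≤ r) :
    0 ≤ p.eval r := by
  rw [Polynomial.eval_eq_sum_range]
  exact Finset.sum_nonneg fun i _ => mul_nonneg (hp i) (pow_nonneg hr i)

lemma deriv_eval_le {p : Polynomial ℝ} {k : ℕ} (hp : ∀ i, 0 ≤ p.coeff i)
    (hd : p.natDegree ≤ k) {r : ℝ} (hr : 1 ≤ r) :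
    (derivative p).eval r ≤ (k : ℝ) * p.eval r := by
  have h0r : (0:ℝ) ≤ r := le_trans zero_le_one hr
  have hlt : (derivative p).natDegree < k + 1 := by
    have := Polynomial.natDegree_derivative_le p
    omega
  rw [Polynomial.eval_eq_sum_range' hlt]
  have step1 : ∑ i ∈ Finset.range (k+1), (derivative p).coeff i * r ^ i
      ≤ ∑ i ∈ Finset.range (k+1), (k : ℝ) * (p.coeff (i+1) * r ^ (i+1)) := by
    apply Finset.sum_le_sum
    intro i _
    rw [Polynomial.coeff_derivative]
    by_cases hik : i + 1 ≤ k
    · have h1 : ((i:ℝ) + 1) ≤ (k : ℝ) := by exact_mod_cast hik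
      have h2 : r ^ i ≤ r ^ (i+1) := pow_le_pow_right₀ hr (Nat.le_succ i)
      have h3 : (0:ℝ) ≤ p.coeff (i+1) := hp _
      calc p.coeff (i+1) * ((i:ℝ)+1) * r ^ i ≤ p.coeff (i+1) * (k:ℝ) * r ^ (i+1) := by
            apply mul_le_mul (mul_le_mul le_rfl h1 (by positivity) h3) h2 (by positivity)
            positivity
        _ = (k:ℝ) * (p.coeff (i+1) * r ^ (i+1)) := by ring
    · have hz : p.coeff (i+1) = 0 := Polynomial.coeff_eq_zero_of_natDegree_lt (by omega)
      simp [hz]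
  refine le_trans step1 ?_
  rw [← Finset.mul_sum]
  apply mul_le_mul_of_nonneg_left _ (Nat.cast_nonneg k)
  have heval : p.eval r = ∑ j ∈ Finset.range (k+2), p.coeff j * r ^ j :=
    Polynomial.eval_eq_sum_range' (by omega) r
  have hsplit := Finset.sum_range_succ' (fun j => p.coeff j * r ^ j) (k+1)
  have h0 : 0 ≤ p.coeff 0 * r ^ 0 := mul_nonneg (hp 0) (by positivity)
  rw [heval, hsplit]
  simp only [pow_zero]
  nlinarith [h0]

lemma aeval_abs_le {p : Polynomial ℝ} (hp : ∀ i, 0 ≤ p.coeff i) {r : ℝ} (hr : 0 ≤ r)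
    {z : ℂ} (hz : ‖z‖ ≤ r) : ‖aeval z p‖ ≤ p.eval r := by
  rw [Polynomial.aeval_eq_sum_range, Polynomial.eval_eq_sum_range]
  refine le_trans (norm_sum_le _ _) (Finset.sum_le_sum ?_)
  intro i _
  have h1 : ‖p.coeff i • z ^ i‖ = p.coeff i * ‖z‖ ^ i := by
    rw [norm_smul, Real.norm_eq_abs, abs_of_nonneg (hp i), norm_pow]
  rw [h1]
  exact mul_le_mul_of_nonneg_left (pow_le_pow_left₀ (norm_nonneg z) hz i) (hp i)

lemma Qaux_eval_le (n : ℕ) {r : ℝ} (hr : 1 ≤ r) (hn : r + 2 < (n : ℝ)) :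
    ∀ k, (Qaux n k).eval r ≤ (Nat.factorial k : ℝ) * r ^ k := by
  have h0r : (0:ℝ) ≤ r := le_trans zero_le_one hr
  have hN : (0:ℝ) < (n : ℝ) := by linarith
  intro k
  induction k with
  | zero => simp [Qaux]
  | succ k ih =>
      have hE0 : 0 ≤ (Qaux n k).eval r := eval_nonneg' (Qaux_coeff_nonneg n k) h0r
      have hD : (derivative (Qaux n k)).eval r ≤ (k : ℝ) * (Qaux n k).eval r :=
        deriv_eval_le (Qaux_coeff_nonneg n k) (Qaux_natDegree_le n k) hr
      have hD0 : 0 ≤ (derivative (Qaux n k)).eval r := by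
        apply eval_nonneg' _ h0r
        intro j
        rw [Polynomial.coeff_derivative]
        exact mul_nonneg (Qaux_coeff_nonneg n k _) (by positivity)
      have heval : (Qaux n (k+1)).eval r
          = ((n:ℝ))⁻¹ * (r * (1 + r)) * (derivative (Qaux n k)).eval r
            + ((n:ℝ))⁻¹ * ((n:ℝ) * r + (k:ℝ)) * (Qaux n k).eval r := by
        rw [Qaux]; simp
      rw [heval]
      set E := (Qaux n k).eval r with hEdef
      set D := (derivative (Qaux n k)).eval r with hDdef
      have hkey : ((n:ℝ))⁻¹ * ((k:ℝ) * (r * (1+r)) + (k:ℝ)) ≤ (k:ℝ) * r := by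
        rw [inv_mul_le_iff₀ hN]
        have h1 : r * (1+r) + 1 ≤ (n:ℝ) * r := by nlinarith
        have hk0 : (0:ℝ) ≤ (k:ℝ) := Nat.cast_nonneg k
        nlinarith
      have step : ((n:ℝ))⁻¹ * (r * (1 + r)) * D + ((n:ℝ))⁻¹ * ((n:ℝ) * r + (k:ℝ)) * E
          ≤ ((k:ℝ) + 1) * r * E := by
        have h2 : ((n:ℝ))⁻¹ * (r * (1 + r)) * D ≤ ((n:ℝ))⁻¹ * (r * (1 + r)) * ((k:ℝ) * E) := by
          apply mul_le_mul_of_nonneg_left hD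
          positivity
        have h3 : ((n:ℝ))⁻¹ * ((n:ℝ) * r + (k:ℝ)) * E
            = r * E + ((n:ℝ))⁻¹ * (k:ℝ) * E := by
          field_simp
        nlinarith [mul_le_mul_of_nonneg_right hkey hE0]
      refine le_trans step ?_
      have h4 : ((k:ℝ) + 1) * r * E ≤ ((k:ℝ) + 1) * r * ((Nat.factorial k : ℝ) * r ^ k) := by
        apply mul_le_mul_of_nonneg_left ih
        positivity
      refine le_trans h4 (le_of_eq ?_)
      rw [Nat.factorial_succ]
      push_cast
      ring

/-- For `f(z) = Σ c_k z^k` analytic on `D_R` (`1 < R`) with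
`|c_k| ≤ M A^k/k!` (`M > 0`, `1/R < A < 1`), if `1 ≤ r < 1/A`, then for `|z| ≤ r` and
`n > r + 2`, the series `L_n*(f)(z) = Σ_k c_k T_{n,k}(z)` converges absolutely and
`|L_n*(f)(z)| ≤ M e^{Ar} + M(r+2) Σ_{k=0}^∞ (k+1)(Ar)^k`. -/
theorem Lstar_well_defined (R : ℝ) (hR : 1 < R) (f : ℂ → ℂ) (c : ℕ → ℂ)
    (hf : ∀ z : ℂ, ‖z‖ < R → HasSum (fun k => c k * z ^ k) (f z))
    (M A : ℝ) (hM : 0 < M) (hA₁ : 1 / R < A) (hA₂ : A < 1)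
    (hc : ∀ k : ℕ, ‖c k‖ ≤ M * A ^ k / (k.factorial : ℝ))
    (r : ℝ) (hr : 1 ≤ r) (hrA : r < 1 / A)
    (n : ℕ) (hn : r + 2 < (n : ℝ)) (z : ℂ) (hz : ‖z‖ ≤ r) :
    Summable (fun k : ℕ => ‖c k * T n k z‖) ∧
      ‖∑' k : ℕ, c k * T n k z‖
        ≤ M * Real.exp (A * r) + M * (r + 2) * ∑' k : ℕ, ((k : ℝ) + 1) * (A * r) ^ k := by
  have h0r : (0:ℝ) ≤ r := le_trans zero_le_one hr
  have hA0 : 0 < A := lt_trans (by positivity) hA₁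
  have hAr1 : A * r < 1 := by
    have h := (lt_div_iff₀ hA0).mp hrA
    linarith [mul_comm A r]
  have hAr0 : (0:ℝ) ≤ A * r := mul_nonneg hA0.le h0r
  -- bound on |T n k z|
  have hT : ∀ k, ‖T n k z‖ ≤ (Nat.factorial k : ℝ) * r ^ k := by
    intro k
    rw [T_eq_Qaux]
    exact le_trans (aeval_abs_le (Qaux_coeff_nonneg n k) h0r hz) (Qaux_eval_le n hr hn k)
  -- termwise bound
  have hterm : ∀ k, ‖c k * T n k z‖ ≤ M * (A * r) ^ k := by
    intro k
    rw [norm_mul]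
    have hfac : (0:ℝ) < (Nat.factorial k : ℝ) := by positivity
    calc ‖c k‖ * ‖T n k z‖
        ≤ (M * A ^ k / (Nat.factorial k : ℝ)) * ((Nat.factorial k : ℝ) * r ^ k) := by
          apply mul_le_mul (hc k) (hT k) (norm_nonneg _)
          positivity
      _ = M * (A * r) ^ k := by
          field_simp
          ring
  have hsum_geo : Summable (fun k : ℕ => M * (A * r) ^ k) :=
    (summable_geometric_of_lt_one hAr0 hAr1).mul_left M
  have hsum : Summable (fun k : ℕ => ‖c k * T n k z‖) :=
    Summable.of_nonneg_of_le (fun k => norm_nonneg _) hterm hsum_geo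
  refine ⟨hsum, ?_⟩
  -- summability of (k+1)(Ar)^k
  have hsum2 : Summable (fun k : ℕ => ((k:ℝ) + 1) * (A * r) ^ k) := by
    have ha : Summable (fun k : ℕ => (k:ℝ) ^ 1 * (A * r) ^ k) :=
      summable_pow_mul_geometric_of_norm_lt_one 1 (by rwa [Real.norm_eq_abs, abs_of_nonneg hAr0])
    refine (ha.add (summable_geometric_of_lt_one hAr0 hAr1)).congr ?_
    intro k
    push_cast
    ring
  have habs : ‖∑' k : ℕ, c k * T n k z‖
      ≤ ∑' k : ℕ, ‖c k * T n k z‖ := by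
    have h := norm_tsum_le_tsum_norm (f := fun k : ℕ => c k * T n k z)
      (by simpa using hsum)
    simpa using h
  have t1 : ∑' k : ℕ, ‖c k * T n k z‖ ≤ ∑' k : ℕ, M * (A * r) ^ k :=
    Summable.tsum_le_tsum hterm hsum hsum_geo
  have t2 : ∑' k : ℕ, M * (A * r) ^ k = M * ∑' k : ℕ, (A * r) ^ k := tsum_mul_left
  have t3 : ∑' k : ℕ, (A * r) ^ k ≤ (r + 2) * ∑' k : ℕ, ((k:ℝ) + 1) * (A * r) ^ k := by
    have h1 : ∑' k : ℕ, (A * r) ^ k ≤ ∑' k : ℕ, (r + 2) * (((k:ℝ) + 1) * (A * r) ^ k) := by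
      apply Summable.tsum_le_tsum _ (summable_geometric_of_lt_one hAr0 hAr1) (hsum2.mul_left (r + 2))
      intro k
      have hk1 : (1:ℝ) ≤ (r + 2) * ((k:ℝ) + 1) := by
        have : (0:ℝ) ≤ (k:ℝ) := Nat.cast_nonneg k
        nlinarith
      calc (A * r) ^ k = 1 * (A * r) ^ k := (one_mul _).symm
        _ ≤ ((r + 2) * ((k:ℝ) + 1)) * (A * r) ^ k :=
            mul_le_mul_of_nonneg_right hk1 (pow_nonneg hAr0 k)
        _ = (r + 2) * (((k:ℝ) + 1) * (A * r) ^ k) := by ring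
    rw [tsum_mul_left] at h1
    exact h1
  have hexp : 0 < M * Real.exp (A * r) := mul_pos hM (Real.exp_pos _)
  have hfin : M * ∑' k : ℕ, (A * r) ^ k
      ≤ M * ((r + 2) * ∑' k : ℕ, ((k:ℝ) + 1) * (A * r) ^ k) :=
    mul_le_mul_of_nonneg_left t3 hM.le
  calc ‖∑' k : ℕ, c k * T n k z‖
      ≤ ∑' k : ℕ, ‖c k * T n k z‖ := habs
    _ ≤ M * ∑' k : ℕ, (A * r) ^ k := by rw [← t2]; exact t1
    _ ≤ M * ((r + 2) * ∑' k : ℕ, ((k:ℝ) + 1) * (A * r) ^ k) := hfin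
    _ ≤ M * Real.exp (A * r) + M * (r + 2) * ∑' k : ℕ, ((k:ℝ) + 1) * (A * r) ^ k := by
        nlinarith [hexp]
end

section
/- Let f : D_R → ℂ, 1 < R < ∞, be analytic with f(z) = Σ_{k=0}^∞ c_k z^k on D_R, and suppose there exist M > 0 and A ∈ (1/R, 1) such that |c_k| ≤ M A^k / k! for all k ≥ 0. If 1 ≤ r < 1/A, then for all z with |z| ≤ r and all n ∈ ℕ with n > r + 2, |L_n*(f)(z) − f(z)| ≤ C_{r,A,M}/n, where C_{r,A,M} = (M(r+2)/r) · Σ_{k=2}^∞ (k+1)(rA)^k < ∞. -/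
open Polynomial
noncomputable def Qp (n : ℕ) : ℕ → Polynomial ℝ
  | 0 => 1
  | k + 1 => C ((n:ℝ))⁻¹ * (X * (Qp n k).derivative + X^2 * (Qp n k).derivative
      + C (n:ℝ) * (X * Qp n k) + C (k:ℝ) * Qp n k)

def NN (p : Polynomial ℝ) : Prop := ∀ j, 0 ≤ p.coeff j

lemma coeff_X_mul' (p : Polynomial ℝ) (j : ℕ) :
    (X * p).coeff j = if j = 0 then 0 else p.coeff (j-1) := by
  cases j with
  | zero => simp [mul_coeff_zero]
  | succ j => simp [coeff_X_mul]

lemma NN.add {p q : Polynomial ℝ} (hp : NN p) (hq : NN q) : NN (p + q) := by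
  intro j; simp only [coeff_add]; exact add_nonneg (hp j) (hq j)

lemma NN.Cmul {a : ℝ} {p : Polynomial ℝ} (ha : 0 ≤ a) (hp : NN p) : NN (C a * p) := by
  intro j; simp only [coeff_C_mul]; exact mul_nonneg ha (hp j)

lemma NN.Xmul {p : Polynomial ℝ} (hp : NN p) : NN (X * p) := by
  intro j; rw [coeff_X_mul']; split
  · rfl
  · exact hp _

lemma NN.deriv {p : Polynomial ℝ} (hp : NN p) : NN p.derivative := by
  intro j; rw [coeff_derivative]; exact mul_nonneg (hp _) (by positivity)
  
lemma Qp_NN (n : ℕ) (k : ℕ) : NN (Qp n k) := by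
  induction k with
  | zero =>
    intro j; rw [Qp, coeff_one]; split <;> norm_num
  | succ k ih =>
    have hX2 : X^2 * (Qp n k).derivative = X * (X * (Qp n k).derivative) := by ring
    rw [Qp, hX2]
    exact NN.Cmul (by positivity) ((((ih.deriv.Xmul).add (ih.deriv.Xmul.Xmul)).add
      (NN.Cmul (by positivity) ih.Xmul)).add (NN.Cmul (by positivity) ih))

lemma Qp_coeff_eq_zero (n : ℕ) (k : ℕ) : ∀ j, k < j → (Qp n k).coeff j = 0 := by
  induction k with
  | zero => intro j hj; rw [Qp, coeff_one, if_neg (by omega)]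
  | succ k ih =>
    intro j hj
    obtain ⟨m, rfl⟩ : ∃ m, j = m + 2 := ⟨j - 2, by omega⟩
    have hX2 : X^2 * (Qp n k).derivative = X * (X * (Qp n k).derivative) := by ring
    rw [Qp, hX2]
    simp only [coeff_C_mul, coeff_add, coeff_X_mul, coeff_derivative]
    rw [ih (m+1) (by omega), ih (m+2) (by omega)]
    ring

lemma Qp_natDegree_le (n k : ℕ) : (Qp n k).natDegree ≤ k :=
  Polynomial.natDegree_le_iff_coeff_eq_zero.2 (Qp_coeff_eq_zero n k)

lemma Qp_lead (n : ℕ) (hn : 1 ≤ n) (k : ℕ) : 1 ≤ (Qp n k).coeff k := by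
  induction k with
  | zero => rw [Qp, coeff_one]; norm_num
  | succ k ih =>
    have hX2 : X^2 * (Qp n k).derivative = X * (X * (Qp n k).derivative) := by ring
    rw [Qp, hX2]
    simp only [coeff_C_mul, coeff_add, coeff_X_mul, coeff_derivative]
    rw [Qp_coeff_eq_zero n k (k+1) (by omega)]
    have h1 : 0 ≤ (X * (Qp n k).derivative).coeff k := (Qp_NN n k).deriv.Xmul k
    have hn' : (1:ℝ) ≤ (n:ℝ) := by exact_mod_cast hn
    have hQ : (1:ℝ) ≤ (Qp n k).coeff k := ih
    have hinv : 0 < ((n:ℝ))⁻¹ := by positivity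
    have hne : (n:ℝ) ≠ 0 := by positivity
    have key : ((n:ℝ))⁻¹ * ((n:ℝ) * (Qp n k).coeff k) = (Qp n k).coeff k := by
      field_simp
    nlinarith [key, mul_nonneg hinv.le h1, hQ]

lemma Qp_eval_eq (n k : ℕ) (x : ℝ) :
    (Qp n k).eval x = ∑ j ∈ Finset.range (k+1), (Qp n k).coeff j * x^j :=
  eval_eq_sum_range' (lt_of_le_of_lt (Qp_natDegree_le n k) (Nat.lt_succ_self k)) x

lemma Qp_eval_nonneg (n k : ℕ) {x : ℝ} (hx : 0 ≤ x) : 0 ≤ (Qp n k).eval x := by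
  rw [Qp_eval_eq]
  exact Finset.sum_nonneg fun j _ => mul_nonneg (Qp_NN n k j) (by positivity)

lemma Qp_deriv_eval_le (n k : ℕ) {x : ℝ} (hx : 1 ≤ x) :
    x * (Qp n k).derivative.eval x ≤ (k : ℝ) * (Qp n k).eval x := by
  have hx0 : (0:ℝ) < x := lt_of_lt_of_le one_pos hx
  have hd : (Qp n k).derivative.natDegree < k + 1 := by
    have h1 := natDegree_derivative_le (Qp n k)
    have h2 := Qp_natDegree_le n k
    omega
  rw [eval_eq_sum_range' hd x, Finset.mul_sum]
  have step1 : ∀ j ∈ Finset.range (k+1),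
      x * ((Qp n k).derivative.coeff j * x ^ j)
        ≤ (k:ℝ) * ((Qp n k).coeff (j+1) * x^(j+1)) := by
    intro j hj
    rw [coeff_derivative]
    rcases eq_or_lt_of_le (Nat.lt_succ_iff.1 (Finset.mem_range.1 hj)) with hjk | hjk
    · rw [hjk, Qp_coeff_eq_zero n k (k+1) (Nat.lt_succ_self k)]
      simp
    · have hco := Qp_NN n k (j+1)
      have hj1 : ((j:ℝ)+1) ≤ (k:ℝ) := by exact_mod_cast hjk
      have : (Qp n k).coeff (j+1) * ((j:ℝ)+1) ≤ (Qp n k).coeff (j+1) * (k:ℝ) :=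
        mul_le_mul_of_nonneg_left hj1 hco
      calc x * ((Qp n k).coeff (j+1) * ((j:ℝ)+1) * x^j)
          = ((Qp n k).coeff (j+1) * ((j:ℝ)+1)) * x^(j+1) := by ring
        _ ≤ ((Qp n k).coeff (j+1) * (k:ℝ)) * x^(j+1) :=
            mul_le_mul_of_nonneg_right this (by positivity)
        _ = (k:ℝ) * ((Qp n k).coeff (j+1) * x^(j+1)) := by ring
  calc ∑ j ∈ Finset.range (k+1), x * ((Qp n k).derivative.coeff j * x ^ j)
      ≤ ∑ j ∈ Finset.range (k+1), (k:ℝ) * ((Qp n k).coeff (j+1) * x^(j+1)) :=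
        Finset.sum_le_sum step1
    _ = (k:ℝ) * ∑ j ∈ Finset.range (k+1), (Qp n k).coeff (j+1) * x^(j+1) := by
        rw [Finset.mul_sum]
    _ ≤ (k:ℝ) * (Qp n k).eval x := by
        apply mul_le_mul_of_nonneg_left _ (by positivity)
        have : (Qp n k).eval x = ∑ i ∈ Finset.range (k+2), (Qp n k).coeff i * x^i :=
          eval_eq_sum_range' (by have := Qp_natDegree_le n k; omega) x
        have e2 : ∑ i ∈ Finset.range (k+2), (Qp n k).coeff i * x^i
            = (∑ j ∈ Finset.range (k+1), (Qp n k).coeff (j+1) * x^(j+1)) + (Qp n k).coeff 0 * x^0 :=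
          Finset.sum_range_succ' (fun i => (Qp n k).coeff i * x^i) (k+1)
        have h0 : 0 ≤ (Qp n k).coeff 0 * x^0 := mul_nonneg (Qp_NN n k 0) (by positivity)
        linarith [this, e2]

lemma Qp_eval_succ_le (n k : ℕ) (hn : 0 < n) {x : ℝ} (hx : 1 ≤ x) :
    (Qp n (k+1)).eval x ≤ (x + (k:ℝ)*(2+x)/(n:ℝ)) * (Qp n k).eval x := by
  have hx0 : (0:ℝ) < x := lt_of_lt_of_le one_pos hx
  have hN : (0:ℝ) < (n:ℝ) := by exact_mod_cast hn
  have hD := Qp_deriv_eval_le n k hx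
  have hQ := Qp_eval_nonneg n k hx0.le
  rw [Qp]
  simp only [eval_mul, eval_add, eval_pow, eval_C, eval_X]
  have hD2 : x^2 * (Qp n k).derivative.eval x ≤ x * ((k:ℝ) * (Qp n k).eval x) := by
    have := mul_le_mul_of_nonneg_left hD hx0.le
    calc x^2 * (Qp n k).derivative.eval x = x * (x * (Qp n k).derivative.eval x) := by ring
      _ ≤ x * ((k:ℝ) * (Qp n k).eval x) := this
  calc ((n:ℝ))⁻¹ * (x * eval x (derivative (Qp n k)) + x ^ 2 * eval x (derivative (Qp n k)) + (n:ℝ) * (x * eval x (Qp n k)) + (k:ℝ) * eval x (Qp n k))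
      ≤ ((n:ℝ))⁻¹ * ((k:ℝ) * (Qp n k).eval x + x * ((k:ℝ) * (Qp n k).eval x)
          + (n:ℝ) * (x * (Qp n k).eval x) + (k:ℝ) * (Qp n k).eval x) := by
        apply mul_le_mul_of_nonneg_left _ (by positivity)
        linarith
    _ = (x + (k:ℝ)*(2+x)/(n:ℝ)) * (Qp n k).eval x := by
        field_simp
        ring

lemma step_ineq (r N F K P : ℝ) (hr : 1 ≤ r) (hN : r + 2 < N) (hK : 0 ≤ K)
    (hKF : K + 1 ≤ F) (hP : 1 ≤ P) :
    (r + K*(2+r)/N) * (F*((r+2)*P)/(r*N)) + K*(2+r)/N * P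
      ≤ ((K+2)*F)*((r+2)*(r*P))/(r*N) := by
  have hr0 : (0:ℝ) < r := by linarith
  have hN0 : (0:ℝ) < N := by linarith
  have hF : (0:ℝ) ≤ F := by linarith
  have hP0 : (0:ℝ) < P := by linarith
  have h1 : K*((2+r)*(r*(N*P))) ≤ F*((2+r)*(r*(N*P))) := by
    have : K ≤ F := by linarith
    exact mul_le_mul_of_nonneg_right this (by positivity)
  have h2 : (F*((r+2)*(P*K)))*(2+r) ≤ (F*((r+2)*(P*K)))*(N*r) := by
    have h3 : (2+r) ≤ N*r := by nlinarith
    have : (0:ℝ) ≤ F*((r+2)*(P*K)) := by positivity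
    exact mul_le_mul_of_nonneg_left h3 this
  have hNne : N ≠ 0 := ne_of_gt hN0
  have hrne : r ≠ 0 := ne_of_gt hr0
  have key : ((K+2)*F)*((r+2)*(r*P))/(r*N) - ((r + K*(2+r)/N) * (F*((r+2)*P)/(r*N)) + K*(2+r)/N * P)
      = ((K+2)*F*((r+2)*(r*P))*N - ((r*N + K*(2+r)) * (F*((r+2)*P)) + K*(2+r)*P*(r*N))) / (r*N*N) := by
    field_simp
  have hnum : 0 ≤ (K+2)*F*((r+2)*(r*P))*N - ((r*N + K*(2+r)) * (F*((r+2)*P)) + K*(2+r)*P*(r*N)) := by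
    nlinarith [h1, h2]
  have := div_nonneg hnum (by positivity : (0:ℝ) ≤ r*N*N)
  linarith [key ▸ this]

lemma u_bound (n k : ℕ) {r : ℝ} (hr : 1 ≤ r) (hn : r + 2 < (n:ℝ)) :
    (Qp n k).eval r - r^k ≤ ((k+1).factorial : ℝ) * ((r+2) * r^k) / (r * (n:ℝ)) := by
  have hr0 : (0:ℝ) < r := by linarith
  have hN0 : (0:ℝ) < (n:ℝ) := by linarith
  have hn0 : 0 < n := by exact_mod_cast hN0
  induction k with
  | zero =>
    rw [Qp]
    simp only [eval_one, pow_zero]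
    have : (0:ℝ) ≤ ((0+1).factorial : ℝ) * ((r+2) * 1) / (r * (n:ℝ)) := by positivity
    norm_num
    positivity
  | succ k ih =>
    have hstep := Qp_eval_succ_le n k hn0 hr
    have hP : (1:ℝ) ≤ r^k := one_le_pow₀ hr
    have hKF : (k:ℝ) + 1 ≤ ((k+1).factorial : ℝ) := by
      exact_mod_cast Nat.self_le_factorial (k+1)
    have h1 : (Qp n (k+1)).eval r - r^(k+1)
        ≤ (r + (k:ℝ)*(2+r)/(n:ℝ)) * (((k+1).factorial : ℝ)*((r+2)*r^k)/(r*(n:ℝ)))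
          + (k:ℝ)*(2+r)/(n:ℝ) * r^k := by
      have hcoef : (0:ℝ) ≤ r + (k:ℝ)*(2+r)/(n:ℝ) := by positivity
      have hmul := mul_le_mul_of_nonneg_left ih hcoef
      have expand : (r + (k:ℝ)*(2+r)/(n:ℝ)) * ((Qp n k).eval r) - r^(k+1)
          = (r + (k:ℝ)*(2+r)/(n:ℝ)) * ((Qp n k).eval r - r^k) + (k:ℝ)*(2+r)/(n:ℝ) * r^k := by
        ring
      linarith
    have h2 := step_ineq r (n:ℝ) ((k+1).factorial : ℝ) (k:ℝ) (r^k) hr hn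
      (Nat.cast_nonneg k) hKF hP
    have hfact : ((k+1+1).factorial : ℝ) = ((k:ℝ)+2) * ((k+1).factorial : ℝ) := by
      rw [Nat.factorial_succ]
      push_cast
      ring
    calc (Qp n (k+1)).eval r - r^(k+1)
        ≤ (r + (k:ℝ)*(2+r)/(n:ℝ)) * (((k+1).factorial : ℝ)*((r+2)*r^k)/(r*(n:ℝ)))
          + (k:ℝ)*(2+r)/(n:ℝ) * r^k := h1
      _ ≤ (((k:ℝ)+2)*((k+1).factorial : ℝ))*((r+2)*(r*r^k))/(r*(n:ℝ)) := h2
      _ = ((k+1+1).factorial : ℝ) * ((r+2) * r^(k+1)) / (r * (n:ℝ)) := by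
          rw [hfact]
          ring

lemma T_eq (n : ℕ) : ∀ (k : ℕ) (z : ℂ), T n k z = ((Qp n k).map (algebraMap ℝ ℂ)).eval z := by
  intro k
  induction k with
  | zero => intro z; simp [T, Qp]
  | succ k ih =>
    intro z
    have hfun : T n k = fun w => ((Qp n k).map (algebraMap ℝ ℂ)).eval w := funext ih
    show (z * (1 + z) / (n : ℂ)) * deriv (T n k) z
        + (((n : ℂ) * z + (k : ℂ)) / (n : ℂ)) * T n k z = _
    rw [hfun, Polynomial.deriv]
    rw [Qp]
    simp only [Polynomial.map_mul, Polynomial.map_add, Polynomial.map_pow, map_C, map_X,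
      derivative_map, eval_mul, eval_add, eval_pow, eval_C, eval_X, map_inv₀, map_natCast, Polynomial.map_natCast, Polynomial.eval_natCast]
    ring

lemma T_sub_le (n k : ℕ) (hn : 1 ≤ n) {r : ℝ} (hr : 1 ≤ r) {z : ℂ} (hz : ‖z‖ ≤ r) :
    ‖T n k z - z^k‖ ≤ (Qp n k).eval r - r^k := by
  have hr0 : (0:ℝ) < r := by linarith
  set P := (Qp n k).map (algebraMap ℝ ℂ) with hP
  have hdeg : P.natDegree < k + 1 :=
    lt_of_le_of_lt (le_trans (natDegree_map_le) (Qp_natDegree_le n k)) (Nat.lt_succ_self k)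
  have hzk : z^k = ∑ j ∈ Finset.range (k+1), (if j = k then (1:ℂ) else 0) * z^j := by
    rw [Finset.sum_congr rfl (fun j _ => by rw [ite_mul, zero_mul, one_mul])]
    rw [Finset.sum_ite_eq' (Finset.range (k+1)) k (fun j => z^j)]
    simp
  rw [T_eq, ← hP, eval_eq_sum_range' hdeg z, hzk, ← Finset.sum_sub_distrib]
  have hbound : ∀ j ∈ Finset.range (k+1),
      ‖P.coeff j * z^j - (if j = k then (1:ℂ) else 0) * z^j‖
        ≤ ((Qp n k).coeff j - (if j = k then (1:ℝ) else 0)) * r^j := by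
    intro j hj
    have hcoeff : P.coeff j = ((Qp n k).coeff j : ℂ) := by
      rw [hP, coeff_map]; rfl
    have habsz : ‖z‖ ^ j ≤ r ^ j := by
      apply pow_le_pow_left₀ (norm_nonneg z) hz
    have hfac : P.coeff j * z^j - (if j = k then (1:ℂ) else 0) * z^j
        = ((((Qp n k).coeff j - (if j = k then (1:ℝ) else 0)) : ℝ) : ℂ) * z^j := by
      rw [hcoeff]
      split <;> push_cast <;> ring
    rw [hfac, norm_mul, norm_pow, Complex.norm_real, Real.norm_eq_abs]
    have hnn : 0 ≤ (Qp n k).coeff j - (if j = k then (1:ℝ) else 0) := by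
      split
      · next h => subst h; linarith [Qp_lead n hn j]
      · simpa using Qp_NN n k j
    rw [abs_of_nonneg hnn]
    exact mul_le_mul_of_nonneg_left habsz hnn
  calc ‖∑ j ∈ Finset.range (k+1),
          (P.coeff j * z^j - (if j = k then (1:ℂ) else 0) * z^j)‖
      ≤ ∑ j ∈ Finset.range (k+1),
          ‖P.coeff j * z^j - (if j = k then (1:ℂ) else 0) * z^j‖ := by
        have := norm_sum_le (Finset.range (k+1))
          (fun j => P.coeff j * z^j - (if j = k then (1:ℂ) else 0) * z^j)
        exact this
    _ ≤ ∑ j ∈ Finset.range (k+1), ((Qp n k).coeff j - (if j = k then (1:ℝ) else 0)) * r^j :=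
        Finset.sum_le_sum hbound
    _ = (Qp n k).eval r - r^k := by
        rw [Finset.sum_congr rfl (fun j _ => by rw [sub_mul])]
        rw [Finset.sum_sub_distrib, ← Qp_eval_eq]
        congr 1
        rw [Finset.sum_congr rfl (fun j _ => by rw [ite_mul, zero_mul, one_mul])]
        rw [Finset.sum_ite_eq' (Finset.range (k+1)) k (fun j => r^j)]
        simp

/-- Under the hypotheses of Theorem 1 (i): for `|z| ≤ r` and `n > r + 2`,
`|L_n*(f)(z) − f(z)| ≤ C_{r,A,M}/n` where
`C_{r,A,M} = (M(r+2)/r) · Σ_{k=2}^∞ (k+1)(rA)^k`. -/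
theorem Lstar_upper_bound (R : ℝ) (hR : 1 < R) (f : ℂ → ℂ) (c : ℕ → ℂ)
    (hf : ∀ z : ℂ, ‖z‖ < R → HasSum (fun k => c k * z ^ k) (f z))
    (M A : ℝ) (hM : 0 < M) (hA₁ : 1 / R < A) (hA₂ : A < 1)
    (hc : ∀ k : ℕ, ‖c k‖ ≤ M * A ^ k / (k.factorial : ℝ))
    (r : ℝ) (hr : 1 ≤ r) (hrA : r < 1 / A)
    (n : ℕ) (hn : r + 2 < (n : ℝ)) (z : ℂ) (hz : ‖z‖ ≤ r) :
    ‖(∑' k : ℕ, c k * T n k z) - f z‖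
      ≤ (M * (r + 2) / r) * (∑' k : ℕ, (((k : ℝ) + 2) + 1) * (r * A) ^ (k + 2)) / n := by
  have hR0 : (0:ℝ) < R := by linarith
  have hA0 : (0:ℝ) < A := lt_trans (by positivity) hA₁
  have hr0 : (0:ℝ) < r := by linarith
  have hN0 : (0:ℝ) < (n:ℝ) := by linarith
  have hn1 : 1 ≤ n := by exact_mod_cast le_trans (by linarith : (1:ℝ) ≤ (n:ℝ)) le_rfl
  have h1AR : 1 / A < R := by
    rw [div_lt_iff₀ hA0]
    rw [div_lt_iff₀ hR0] at hA₁
    linarith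
  have hx : r * A < 1 := by
    rw [lt_div_iff₀ hA0] at hrA
    exact hrA
  have hx0 : (0:ℝ) ≤ r * A := by positivity
  set N : ℝ := (n:ℝ) with hNdef
  set g : ℕ → ℝ := fun k => M*(r+2)/(r*N) * (((k:ℝ)+1) * (r*A)^k) with hg
  set a : ℕ → ℂ := fun k => c k * (T n k z - z^k) with ha
  have habs : ∀ k, ‖a k‖ ≤ g k := by
    intro k
    have hT : ‖T n k z - z^k‖ ≤ ((k+1).factorial : ℝ) * ((r+2) * r^k) / (r * N) :=
      le_trans (T_sub_le n k hn1 hr hz) (u_bound n k hr hn)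
    have hfac : ((k+1).factorial : ℝ) = ((k:ℝ)+1) * (k.factorial : ℝ) := by
      rw [Nat.factorial_succ]; push_cast; ring
    have hkfac : (0:ℝ) < (k.factorial : ℝ) := by exact_mod_cast Nat.factorial_pos k
    calc ‖a k‖ = ‖c k‖ * ‖T n k z - z^k‖ := by
          rw [ha]; exact norm_mul _ _
      _ ≤ (M * A ^ k / (k.factorial : ℝ)) * (((k+1).factorial : ℝ) * ((r+2) * r^k) / (r * N)) :=
          mul_le_mul (hc k) hT (norm_nonneg _) (by positivity)
      _ = g k := by
          simp only [hg]
          rw [hfac, mul_pow]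
          field_simp
  have hg_sum : Summable g := by
    have hnorm : ‖r * A‖ < 1 := by rwa [Real.norm_eq_abs, abs_of_nonneg hx0]
    have h1 : Summable (fun k : ℕ => ((k:ℝ))^1 * (r*A)^k) :=
      summable_pow_mul_geometric_of_norm_lt_one 1 hnorm
    have h2 : Summable (fun k : ℕ => (r*A)^k) := summable_geometric_of_lt_one hx0 hx
    have h3 : Summable (fun k : ℕ => ((k:ℝ)+1) * (r*A)^k) :=
      Summable.congr (h1.add h2) (by intro b; push_cast; ring)
    exact h3.mul_left _
  have hA_sum : Summable a :=
    Summable.of_norm_bounded hg_sum (fun k => by exact habs k)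
  have hfz : HasSum (fun k => c k * z ^ k) (f z) :=
    hf z (lt_of_le_of_lt hz (lt_trans hrA h1AR))
  have key : (∑' k, c k * T n k z) = (∑' k, a k) + f z := by
    rw [← hfz.tsum_eq, ← Summable.tsum_add hA_sum hfz.summable]
    exact tsum_congr (fun k => by rw [ha]; ring)
  rw [key, add_sub_cancel_right]
  have hT0 : T n 0 z = 1 := by simp [T]
  have hT1 : T n 1 z = z := by
    have hnne : (n:ℂ) ≠ 0 := by
      exact_mod_cast Nat.cast_ne_zero.2 (by omega)
    simp [T]
    field_simp
  have ha0 : a 0 = 0 := by rw [ha]; simp [hT0]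
  have ha1 : a 1 = 0 := by rw [ha]; simp [hT1]
  have hA_sum1 : Summable (fun k => a (k+1)) := (_root_.summable_nat_add_iff 1).2 hA_sum
  have hA_sum2 : Summable (fun k => a (k+2)) := (_root_.summable_nat_add_iff 2).2 hA_sum
  rw [Summable.tsum_eq_zero_add hA_sum, ha0, zero_add, Summable.tsum_eq_zero_add hA_sum1,
    (by norm_num : (0:ℕ)+1 = 1), ha1, zero_add]
  have hidx : (fun k : ℕ => a (k+1+1)) = fun k : ℕ => a (k+2) := by
    funext k; norm_num
  rw [hidx]
  have hnorm2 : ∀ k, ‖a (k+2)‖ ≤ g (k+2) := fun k => by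
    exact habs (k+2)
  have hnsum : Summable (fun k => ‖a (k+2)‖) :=
    Summable.of_nonneg_of_le (fun _ => norm_nonneg _) hnorm2 ((_root_.summable_nat_add_iff 2).2 hg_sum)
  calc ‖∑' k, a (k+2)‖ ≤ ∑' k, ‖a (k+2)‖ := norm_tsum_le_tsum_norm hnsum
    _ ≤ ∑' k, g (k+2) := Summable.tsum_le_tsum hnorm2 hnsum ((_root_.summable_nat_add_iff 2).2 hg_sum)
    _ = M * (r + 2) / r * (∑' k : ℕ, (((k : ℝ) + 2) + 1) * (r * A) ^ (k + 2)) / N := by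
        have e1 : ∀ k : ℕ, g (k+2) = (M*(r+2)/(r*N)) * ((((k:ℝ)+2)+1) * (r*A)^(k+2)) := by
          intro k; simp only [hg]; push_cast; ring
        rw [tsum_congr e1, tsum_mul_left]
        ring
end
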